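/- Divide the hyperbolic plane into four quadrants by two perpendicular geodesic lines crossing at a point x. Then every geodesic segment from a point in one quadrant to a point in the opposite (nonadjacent) quadrant passes within hyperbolic distance ln(1+√2) of x. -/

import Mathlib

open Real MeasureTheory ENNReal
open scoped RealInnerProductSpace

noncomputable section

/-- The plane, used as the underlying set of the Beltrami--Klein disk model
(points of the model are those of Euclidean norm `< 1`). -/
abbrev E2 := EuclideanSpace ℝ (Fin 2)

/-- Inverse hyperbolic cosine. -/
noncomputable def arcosh (x : ℝ) : ℝ := Real.log (x + Real.sqrt (x ^ 2 - 1))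

/-- Hyperbolic distance in the Beltrami--Klein disk model. -/
noncomputable def kDist (p q : E2) : ℝ :=
  _root_.arcosh ((1 - ⟪p, q⟫) / Real.sqrt ((1 - ‖p‖ ^ 2) * (1 - ‖q‖ ^ 2)))

/-- Hyperbolic area of a subset of the Klein disk. -/
noncomputable def kArea (s : Set E2) : ℝ≥0∞ :=
  ∫⁻ p in s, ENNReal.ofReal ((1 - ‖p‖ ^ 2) ^ (-(3 : ℝ) / 2))

/-- The hyperbolic angle at `v` between the geodesic segments from `v` to `u` and
from `v` to `w`, computed via the hyperbolic law of cosines. -/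
noncomputable def kAngle (v u w : E2) : ℝ :=
  Real.arccos ((Real.cosh (kDist v u) * Real.cosh (kDist v w) - Real.cosh (kDist u w)) /
    (Real.sinh (kDist v u) * Real.sinh (kDist v w)))

/-- Hyperbolic distance from a point `v` to the hyperbolic line through `p` and `q`
(a Euclidean line in the Klein model, intersected with the unit disk). -/
noncomputable def kLineDist (v p q : E2) : ℝ :=
  sInf (kDist v '' ((affineSpan ℝ ({p, q} : Set E2) : Set E2) ∩ Metric.ball (0 : E2) 1))

/-- Hyperbolic distance from a point `v` to the geodesic segment from `p` to `q`. -/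
noncomputable def kSegDist (v p q : E2) : ℝ :=
  sInf (kDist v '' segment ℝ p q)

/-- The height of the hyperbolic triangle `a b c` : the minimum over the vertices of
the distance from a vertex to the line of the opposite side. -/
noncomputable def kHeight (a b c : E2) : ℝ :=
  min (kLineDist a b c) (min (kLineDist b a c) (kLineDist c a b))

/-- The hyperbolic triangle with the given vertices: in the Klein model geodesics are
Euclidean segments, so it is the Euclidean convex hull. -/
noncomputable def kTriangle (a b c : E2) : Set E2 := convexHull ℝ ({a, b, c} : Set E2)

lemma normSq_E2 (x : E2) : ‖x‖ ^ 2 = x 0 ^ 2 + x 1 ^ 2 := by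
  rw [EuclideanSpace.norm_eq, Real.sq_sqrt (by positivity)]
  simp [Fin.sum_univ_two, sq_abs]

lemma kDist_zero_le (z : E2) (hz : ‖z‖ ^ 2 ≤ 1 / 2) :
    kDist z 0 ≤ Real.log (1 + Real.sqrt 2) := by
  have hz0 : (0:ℝ) ≤ ‖z‖ ^ 2 := by positivity
  unfold kDist _root_.arcosh
  rw [inner_zero_right]
  simp only [norm_zero, sub_zero]
  set u : ℝ := ‖z‖ ^ 2 with hu
  have h1 : (0:ℝ) < 1 - u := by linarith
  rw [show (1 - u) * (1 - 0 ^ 2) = 1 - u by ring]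
  set x : ℝ := 1 / Real.sqrt (1 - u) with hx
  have hs : Real.sqrt (1 - u) > 0 := Real.sqrt_pos.2 h1
  have hx1 : 1 ≤ x := by
    rw [hx, le_div_iff₀ hs, one_mul]
    exact Real.sqrt_le_one.2 (by linarith)
  have hx2 : x ^ 2 ≤ 2 := by
    rw [hx, div_pow, one_pow, Real.sq_sqrt h1.le, div_le_iff₀ h1]
    linarith
  have hxs : Real.sqrt (x ^ 2 - 1) ≤ 1 :=
    Real.sqrt_le_one.2 (by linarith)
  have hxle : x ≤ Real.sqrt 2 := by
    have h := Real.sqrt_le_sqrt hx2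
    rwa [Real.sqrt_sq (by linarith : (0:ℝ) ≤ x)] at h
  apply Real.log_le_log (by positivity)
  linarith

set_option maxHeartbeats 2000000 in
/-- Divide the hyperbolic plane into four quadrants by two perpendicular geodesics
crossing at a point `x`. In the Klein disk model we may take `x` to be the center of
the disk and the two geodesics to be the coordinate axes, the quadrants being given by
the signs of the coordinates. Then every geodesic segment from a point of one open
quadrant to a point of the opposite open quadrant passes within hyperbolic distance
`ln (1 + √2)` of `x`. -/
theorem opposite_quadrants_segment_near_center (p q : E2)
    (hp : ‖p‖ < 1) (hq : ‖q‖ < 1)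
    (hp0 : 0 < p 0) (hp1 : 0 < p 1) (hq0 : q 0 < 0) (hq1 : q 1 < 0) :
    ∃ z ∈ segment ℝ p q, kDist z 0 ≤ Real.log (1 + Real.sqrt 2) := by
  have hp0' : p 0 < 1 := by nlinarith [normSq_E2 p, sq_nonneg (p 1), norm_nonneg p]
  have hp1' : p 1 < 1 := by nlinarith [normSq_E2 p, sq_nonneg (p 0), norm_nonneg p]
  have hq0' : -1 < q 0 := by nlinarith [normSq_E2 q, sq_nonneg (q 1), norm_nonneg q]
  have hq1' : -1 < q 1 := by nlinarith [normSq_E2 q, sq_nonneg (q 0), norm_nonneg q]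
  set t : ℝ := p 1 / (p 1 - q 1) with ht
  set s : ℝ := p 0 / (p 0 - q 0) with hs
  have hden1 : 0 < p 1 - q 1 := by linarith
  have hden0 : 0 < p 0 - q 0 := by linarith
  have ht0 : 0 ≤ t := by positivity
  have ht1 : t ≤ 1 := by rw [ht, div_le_one hden1]; linarith
  have hs0 : 0 ≤ s := by positivity
  have hs1 : s ≤ 1 := by rw [hs, div_le_one hden0]; linarith
  set A : E2 := (1 - t) • p + t • q with hA
  set B : E2 := (1 - s) • p + s • q with hB
  have hAi : ∀ i, A i = (1 - t) * p i + t * q i := fun i => by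
    rw [hA]; simp [smul_eq_mul]
  have hBi : ∀ i, B i = (1 - s) * p i + s * q i := fun i => by
    rw [hB]; simp [smul_eq_mul]
  have hAmem : A ∈ segment ℝ p q := ⟨1 - t, t, by linarith, ht0, by ring, rfl⟩
  have hBmem : B ∈ segment ℝ p q := ⟨1 - s, s, by linarith, hs0, by ring, rfl⟩
  clear_value A B
  refine ⟨(1/2 : ℝ) • A + (1/2 : ℝ) • B, ?_, ?_⟩
  · exact (convex_segment p q) hAmem hBmem (by norm_num) (by norm_num) (by norm_num)
  · apply kDist_zero_le
    have hA1 : A 1 = 0 := by rw [hAi 1, ht]; field_simp; ring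
    have hB0 : B 0 = 0 := by rw [hBi 0, hs]; field_simp; ring
    have hA0a : A 0 ≤ 1 := by
      rw [hAi 0]
      nlinarith [mul_nonneg (by linarith : (0:ℝ) ≤ 1 - t) (by linarith : (0:ℝ) ≤ 1 - p 0),
        mul_nonneg ht0 (by linarith : (0:ℝ) ≤ 1 - q 0)]
    have hA0b : -1 ≤ A 0 := by
      rw [hAi 0]
      nlinarith [mul_nonneg (by linarith : (0:ℝ) ≤ 1 - t) (by linarith : (0:ℝ) ≤ 1 + p 0),
        mul_nonneg ht0 (by linarith : (0:ℝ) ≤ 1 + q 0)]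
    have hB1a : B 1 ≤ 1 := by
      rw [hBi 1]
      nlinarith [mul_nonneg (by linarith : (0:ℝ) ≤ 1 - s) (by linarith : (0:ℝ) ≤ 1 - p 1),
        mul_nonneg hs0 (by linarith : (0:ℝ) ≤ 1 - q 1)]
    have hB1b : -1 ≤ B 1 := by
      rw [hBi 1]
      nlinarith [mul_nonneg (by linarith : (0:ℝ) ≤ 1 - s) (by linarith : (0:ℝ) ≤ 1 + p 1),
        mul_nonneg hs0 (by linarith : (0:ℝ) ≤ 1 + q 1)]
    have hz0 : ((1/2 : ℝ) • A + (1/2 : ℝ) • B) 0 = A 0 / 2 := by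
      simp [hB0, smul_eq_mul]; ring
    have hz1 : ((1/2 : ℝ) • A + (1/2 : ℝ) • B) 1 = B 1 / 2 := by
      simp [hA1, smul_eq_mul]; ring
    rw [normSq_E2, hz0, hz1]
    have key : ∀ a b : ℝ, -1 ≤ a → a ≤ 1 → -1 ≤ b → b ≤ 1 →
        (a / 2) ^ 2 + (b / 2) ^ 2 ≤ 1 / 2 := by
      intro a b h1 h2 h3 h4
      nlinarith
    exact key _ _ hA0b hA0a hB1b hB1a

end
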